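/- arXiv:1108.2078 — 3 statements merged into one kernel-verified Lean document; each statement's English description precedes it below -/
import Mathlib

section
/- Let Ω be an open Riemann surface on which: (1) H¹(Ω, 𝒪_Ω) is finite-dimensional, and (2) there is a holomorphic map π : Ω → ℂ that is locally biholomorphic. Then any two distinct points a, b ∈ Ω with π(a) = π(b) = 0 are separated by a global holomorphic function on Ω: there exists F meromorphic on Ω, holomorphic except for a pole at a, such that π^h F is holomorphic on Ω with (π^h F)(a) ≠ 0 and (π^h F)(b) = 0 for some h ≥ 1. -/
open Set

/-- A Riemann domain over `ℂⁿ`: a connected topological space `X` together with a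
locally homeomorphic (hence, via the charts given by `π` itself, locally biholomorphic)
projection `π : X → ℂⁿ`. -/
structure RiemannDomain (X : Type*) [TopologicalSpace X] (n : ℕ) where
  π : X → (Fin n → ℂ)
  continuous_π : Continuous π
  connected : ConnectedSpace X
  isLocalHomeomorph : IsLocalHomeomorph π

namespace RiemannDomain

variable {X : Type*} [TopologicalSpace X] {n : ℕ}

/-- `RD.SheetIn Ω r x ρ` : there is a "sheet" inside `Ω` around `x`, i.e. an open set `U ⊆ Ω`
containing `x` on which `π` is injective and whose image is the open polydisc of
multiradius `ρ • r` centered at `π x`. -/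
def SheetIn (RD : RiemannDomain X n) (Ω : Set X) (r : Fin n → ℝ) (x : X) (ρ : ℝ) : Prop :=
  ∃ U : Set X, IsOpen U ∧ x ∈ U ∧ U ⊆ Ω ∧ Set.InjOn RD.π U ∧
    RD.π '' U = {z : Fin n → ℂ | ∀ j, dist (z j) (RD.π x j) < ρ * r j}

/-- `δ` is the boundary distance function of `Ω ⊆ X` with respect to the polydisc of
multiradius `r`: at each point of `Ω` it is the least upper bound of the radii of sheets. -/
def IsBoundaryDistOn (RD : RiemannDomain X n) (Ω : Set X) (r : Fin n → ℝ) (δ : X → ℝ) : Prop :=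
  ∀ x ∈ Ω, IsLUB {ρ : ℝ | 0 < ρ ∧ RD.SheetIn Ω r x ρ} (δ x)

/-- A function `f : X → ℂ` is holomorphic on a subset `A` of the Riemann domain `X` if near
every point of `A` it is, read through a sheet of `π`, (the restriction to `A` of) a
holomorphic function of the base variables. For open `A` this is the usual notion of a
holomorphic function on `A`; for an analytic subset `A` it means local holomorphic
extendability to the ambient space. -/
def HolomorphicOn (RD : RiemannDomain X n) (f : X → ℂ) (A : Set X) : Prop :=
  ∀ x ∈ A, ∃ U : Set X, IsOpen U ∧ x ∈ U ∧ Set.InjOn RD.π U ∧ IsOpen (RD.π '' U) ∧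
    ∃ g : (Fin n → ℂ) → ℂ, DifferentiableOn ℂ g (RD.π '' U) ∧ Set.EqOn f (g ∘ RD.π) (U ∩ A)

/-- Holomorphically convex hull of `K` in `Ω` with respect to `𝒪(Ω)`. -/
def hull (RD : RiemannDomain X n) (Ω K : Set X) : Set X :=
  {x ∈ Ω | ∀ f : X → ℂ, RD.HolomorphicOn f Ω → ‖f x‖ ≤ sSup ((fun y => ‖f y‖) '' K)}

/-- Plurisubharmonicity of `u` on a subset `s ⊆ ℂⁿ`: upper semicontinuity together with the
sub-mean-value inequality on every complex line (on circles whose closed disc stays in `s`). -/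
def PlurisubharmonicOn (u : (Fin n → ℂ) → ℝ) (s : Set (Fin n → ℂ)) : Prop :=
  UpperSemicontinuousOn u s ∧
  ∀ z ∈ s, ∀ w : Fin n → ℂ, ∀ R : ℝ, 0 < R →
    (∀ t : ℂ, ‖t‖ ≤ R → z + t • w ∈ s) →
    u z ≤ (1 / (2 * Real.pi)) *
      ∫ θ in (0:ℝ)..(2 * Real.pi), u (z + ((R : ℂ) * Complex.exp (θ * Complex.I)) • w)

/-- A function `v : X → ℝ` is plurisubharmonic on `Ω ⊆ X` if near every point of `Ω`,
read through a sheet of `π`, it is a plurisubharmonic function of the base variables. -/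
def PSHOn (RD : RiemannDomain X n) (v : X → ℝ) (Ω : Set X) : Prop :=
  ∀ x ∈ Ω, ∃ U : Set X, IsOpen U ∧ x ∈ U ∧ U ⊆ Ω ∧ Set.InjOn RD.π U ∧ IsOpen (RD.π '' U) ∧
    ∃ g : (Fin n → ℂ) → ℝ, PlurisubharmonicOn g (RD.π '' U) ∧ Set.EqOn v (g ∘ RD.π) U

/-- `φ` is an exhaustion function of `X`: all sublevel sets are relatively compact. -/
def IsExhaustion {X : Type*} [TopologicalSpace X] (φ : X → ℝ) : Prop :=
  ∀ c : ℝ, IsCompact (closure {x | φ x < c})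

/-- An open set `Ω` of the Riemann domain `X` is Stein if it is holomorphically separable,
possesses global holomorphic local coordinates at every point, and is holomorphically convex. -/
def IsSteinOn (RD : RiemannDomain X n) (Ω : Set X) : Prop :=
  (∀ a ∈ Ω, ∀ b ∈ Ω, a ≠ b → ∃ f : X → ℂ, RD.HolomorphicOn f Ω ∧ f a ≠ f b) ∧
  (∀ x ∈ Ω, ∃ f : Fin n → (X → ℂ), (∀ j, RD.HolomorphicOn (f j) Ω) ∧
    ∃ U : Set X, IsOpen U ∧ x ∈ U ∧ U ⊆ Ω ∧ Set.InjOn RD.π U ∧ IsOpen (RD.π '' U) ∧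
      ∃ g : (Fin n → ℂ) → (Fin n → ℂ), DifferentiableOn ℂ g (RD.π '' U) ∧
        (∀ y ∈ U, (fun j => f j y) = g (RD.π y)) ∧
        Function.Bijective (fderivWithin ℂ g (RD.π '' U) (RD.π x)) ∧
        Set.InjOn g (RD.π '' U)) ∧
  (∀ K : Set X, K ⊆ Ω → IsCompact K → IsCompact (RD.hull Ω K))

end RiemannDomain

/-- `A` is compactly contained in `B`. -/
def CompactlyContained {X : Type*} [TopologicalSpace X] (A B : Set X) : Prop :=
  IsCompact (closure A) ∧ closure A ⊆ B

namespace RiemannDomain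

variable {X : Type*} [TopologicalSpace X] {n : ℕ}

/-- A holomorphic extension of a Riemann domain `(X, π)` over `ℂⁿ`: a Riemann domain
`(Y, π')` with an injection `ι : X → Y` over `ℂⁿ` to which all global holomorphic
functions of `X` extend. -/
structure Extension (RD : RiemannDomain X n) (Y : Type*) [TopologicalSpace Y]
    (RDY : RiemannDomain Y n) where
  ι : X → Y
  inj : Function.Injective ι
  comm : RDY.π ∘ ι = RD.π
  extends_holo : ∀ f : X → ℂ, RD.HolomorphicOn f Set.univ →
    ∃ g : Y → ℂ, RDY.HolomorphicOn g Set.univ ∧ ∀ x, g (ι x) = f x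

/-- `X` is a domain of holomorphy: it admits no holomorphic extension other than itself,
i.e. any holomorphic extension is onto. -/
def IsDomainOfHolomorphy {X : Type u} [TopologicalSpace X] {n : ℕ}
    (RD : RiemannDomain X n) : Prop :=
  ∀ (Y : Type u) (_ : TopologicalSpace Y) (RDY : RiemannDomain Y n)
    (e : RD.Extension Y RDY), Function.Surjective e.ι

/-- A relatively compact open set `Ω ⋐ X` is strongly pseudoconvex if there are a
neighborhood `U` of `∂Ω` and a `C²` function `φ` on `U` with `Ω ∩ U = {φ < 0}` whose Levi
form (expressed through the charts of `π` by the real Hessian, via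
`⟨∂∂̄ψ(z) w, w⟩ = (1/4)(Hψ(z)(w,w) + Hψ(z)(iw,iw))`) is positive definite. -/
def StronglyPseudoconvex (RD : RiemannDomain X n) (Ω : Set X) : Prop :=
  IsOpen Ω ∧ IsCompact (closure Ω) ∧
  ∃ U : Set X, IsOpen U ∧ frontier Ω ⊆ U ∧ ∃ φ : X → ℝ,
    ({x ∈ U | φ x < 0} = Ω ∩ U) ∧
    ∀ x ∈ U, ∃ V : Set X, IsOpen V ∧ x ∈ V ∧ V ⊆ U ∧ Set.InjOn RD.π V ∧
      IsOpen (RD.π '' V) ∧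
      ∃ ψ : (Fin n → ℂ) → ℝ, ContDiffOn ℝ 2 ψ (RD.π '' V) ∧
        Set.EqOn φ (ψ ∘ RD.π) V ∧
        ∀ z ∈ RD.π '' V, ∀ w : Fin n → ℂ, w ≠ 0 →
          0 < (iteratedFDerivWithin ℝ 2 ψ (RD.π '' V) z) ![w, w] +
              (iteratedFDerivWithin ℝ 2 ψ (RD.π '' V) z)
                ![(Complex.I : ℂ) • w, (Complex.I : ℂ) • w]

/-- `S` is a closed complex submanifold of the open set `Ω ⊆ X`: it is closed in `Ω` and is
locally, through the charts of `π`, the common zero set of finitely many holomorphic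
functions with linearly independent differentials. -/
def IsClosedSubmanifoldIn (RD : RiemannDomain X n) (S Ω : Set X) : Prop :=
  S ⊆ Ω ∧ IsClosed (Subtype.val ⁻¹' S : Set Ω) ∧
  ∀ x ∈ S, ∃ U : Set X, IsOpen U ∧ x ∈ U ∧ U ⊆ Ω ∧ Set.InjOn RD.π U ∧ IsOpen (RD.π '' U) ∧
    ∃ (d : ℕ) (h : Fin d → (Fin n → ℂ) → ℂ),
      (∀ i, DifferentiableOn ℂ (h i) (RD.π '' U)) ∧
      (U ∩ S = {y ∈ U | ∀ i, h i (RD.π y) = 0}) ∧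
      LinearIndependent ℂ (fun i => fderivWithin ℂ (h i) (RD.π '' U) (RD.π x))

end RiemannDomain

/-- On an open Riemann surface `Ω` with `H¹(Ω, 𝒪)` finite-dimensional
(encoded: for some `d`, any `d+1` Čech 1-cocycles for a two-set open cover admit a
nontrivial linear combination that is a coboundary) carrying a locally biholomorphic
`π : Ω → ℂ`, any two distinct points `a ≠ b` with `π a = π b = 0` are separated: there is
`F` holomorphic off `a` such that `π^h F` extends to `G ∈ 𝒪(Ω)` with `G a ≠ 0`, `G b = 0`. -/
theorem stmt_6 {Ω : Type*} [TopologicalSpace Ω] (RD : RiemannDomain Ω 1)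
    (hH1 : ∃ d : ℕ, ∀ U₀ U₁ : Set Ω, IsOpen U₀ → IsOpen U₁ → U₀ ∪ U₁ = Set.univ →
      ∀ γ : Fin (d + 1) → Ω → ℂ, (∀ k, RD.HolomorphicOn (γ k) (U₀ ∩ U₁)) →
        ∃ c : Fin (d + 1) → ℂ, c ≠ 0 ∧
          ∃ f₀ f₁ : Ω → ℂ, RD.HolomorphicOn f₀ U₀ ∧ RD.HolomorphicOn f₁ U₁ ∧
            Set.EqOn (fun x => ∑ k, c k * γ k x) (fun x => f₁ x - f₀ x) (U₀ ∩ U₁))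
    (a b : Ω) (hab : a ≠ b) (ha : RD.π a = 0) (hb : RD.π b = 0) :
    ∃ h : ℕ, 1 ≤ h ∧ ∃ F G : Ω → ℂ,
      RD.HolomorphicOn F ({a}ᶜ) ∧ RD.HolomorphicOn G Set.univ ∧
      Set.EqOn G (fun x => (RD.π x 0) ^ h * F x) ({a}ᶜ) ∧ G a ≠ 0 ∧ G b = 0 := by
  classical
  obtain ⟨d, hd⟩ := hH1
  have hopen : IsOpenMap RD.π := RD.isLocalHomeomorph.isOpenMap
  -- complements of singletons are open
  have hcompl : ∀ p : Ω, IsOpen ({p}ᶜ : Set Ω) := by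
    intro p
    rw [isOpen_iff_forall_mem_open]
    intro x hx
    obtain ⟨e, hxe, hee⟩ := RD.isLocalHomeomorph x
    by_cases hp : p ∈ e.source
    · refine ⟨e.source ∩ RD.π ⁻¹' ({RD.π p}ᶜ), ?_, e.open_source.inter
        ((isOpen_compl_singleton).preimage RD.continuous_π), hxe, ?_⟩
      · intro y hy
        simp only [Set.mem_compl_iff, Set.mem_singleton_iff]
        intro hyp
        subst hyp
        exact hy.2 rfl
      · simp only [Set.mem_preimage, Set.mem_compl_iff, Set.mem_singleton_iff]
        intro hxp
        apply hx
        have h1 : x = p := e.injOn hxe hp (by rw [hee] at hxp; exact hxp)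
        simp [h1]
    · refine ⟨e.source, ?_, e.open_source, hxe⟩
      intro y hy
      simp only [Set.mem_compl_iff, Set.mem_singleton_iff]
      intro hyp
      subst hyp
      exact hp hy
  -- the sheet around `a`
  obtain ⟨e, hae, hee⟩ := RD.isLocalHomeomorph a
  set U₀ : Set Ω := e.source with hU₀
  have hU₀open : IsOpen U₀ := e.open_source
  have hU₀inj : Set.InjOn RD.π U₀ := by rw [hee]; exact e.injOn
  set U₁ : Set Ω := {a}ᶜ with hU₁
  have hU₁open : IsOpen U₁ := hcompl a
  have hcover : U₀ ∪ U₁ = Set.univ := by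
    ext x; simp only [Set.mem_union, Set.mem_univ, iff_true]
    by_cases hx : x = a
    · exact Or.inl (hx ▸ hae)
    · exact Or.inr hx
  -- π does not vanish on U₀ \ {a}
  have hπne : ∀ x ∈ U₀, x ≠ a → RD.π x 0 ≠ 0 := by
    intro x hx hxa h0
    apply hxa
    apply hU₀inj hx hae
    rw [ha]
    funext i
    have : i = 0 := Subsingleton.elim i 0
    rw [this, h0, Pi.zero_apply]
  -- the cocycles
  set γ : Fin (d + 1) → Ω → ℂ := fun k x => ((RD.π x 0)⁻¹) ^ (k.val + 1) with hγ
  have hγholo : ∀ k, RD.HolomorphicOn (γ k) (U₀ ∩ U₁) := by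
    intro k x hx
    refine ⟨U₀ ∩ U₁, hU₀open.inter hU₁open, hx, hU₀inj.mono Set.inter_subset_left,
      hopen _ (hU₀open.inter hU₁open), fun z => ((z 0)⁻¹) ^ (k.val + 1), ?_, ?_⟩
    · have hne : ∀ z ∈ RD.π '' (U₀ ∩ U₁), z 0 ≠ 0 := by
        rintro z ⟨y, ⟨hy0, hy1⟩, rfl⟩
        exact hπne y hy0 hy1
      exact (((ContinuousLinearMap.proj 0 : (Fin 1 → ℂ) →L[ℂ] ℂ).differentiable.differentiableOn).inv
        hne).pow _
    · intro y _
      rfl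
  obtain ⟨c, hc0, f₀, f₁, hf₀, hf₁, heqn⟩ := hd U₀ U₁ hU₀open hU₁open hcover γ hγholo
  -- the top nonzero coefficient
  have hSne : (Finset.univ.filter (fun k => c k ≠ 0)).Nonempty := by
    by_contra hS
    apply hc0
    funext k
    by_contra hk
    exact hS ⟨k, Finset.mem_filter.2 ⟨Finset.mem_univ k, hk⟩⟩
  set M : Fin (d + 1) := (Finset.univ.filter (fun k => c k ≠ 0)).max' hSne with hM
  have hcM : c M ≠ 0 := (Finset.mem_filter.1 ((Finset.univ.filter (fun k => c k ≠ 0)).max'_mem hSne)).2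
  have htop : ∀ k, M < k → c k = 0 := by
    intro k hk
    by_contra hck
    exact absurd (Finset.le_max' _ k (Finset.mem_filter.2 ⟨Finset.mem_univ k, hck⟩)) (not_le.2 hk)
  set m : ℕ := M.val with hm
  -- the global function G
  set G : Ω → ℂ := fun x => if x = a then c M else (RD.π x 0) ^ (m + 1) * f₁ x with hG
  -- the key algebraic identity away from zero
  have hkey : ∀ w : ℂ, w ≠ 0 → ∀ k : Fin (d + 1),
      w ^ (m + 1) * (c k * (w⁻¹) ^ (k.val + 1)) = c k * w ^ (m - k.val) := by
    intro w hw k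
    by_cases hck : c k = 0
    · simp [hck]
    · have hkM : k ≤ M := by
        by_contra hkM
        exact hck (htop k (not_le.1 hkM))
      have hkm : k.val ≤ m := hkM
      have hpow : w ^ (m + 1) = w ^ (m - k.val) * w ^ (k.val + 1) := by
        rw [← pow_add]
        congr 1
        omega
      rw [hpow, inv_pow]
      field_simp
  -- value of the polynomial tail at 0
  have hzero : ∑ k : Fin (d + 1), c k * (0 : ℂ) ^ (m - k.val) = c M := by
    rw [Finset.sum_eq_single_of_mem M (Finset.mem_univ M)]
    · simp [hm]
    · intro k _ hk
      rcases lt_or_gt_of_ne hk with hlt | hgt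
      · have : 0 < m - k.val := by
          have : k.val < m := hlt
          omega
        rw [zero_pow (by omega), mul_zero]
      · rw [htop k hgt, zero_mul]
  have hGne : ∀ y : Ω, y ≠ a → G y = (RD.π y 0) ^ (m + 1) * f₁ y := fun y hy => if_neg hy
  have hGa : G a = c M := if_pos rfl
  refine ⟨m + 1, Nat.le_add_left 1 m, f₁, G, hf₁, ?_, ?_, ?_, ?_⟩
  · -- G is holomorphic on univ
    intro x _
    by_cases hxa : x = a
    · obtain ⟨Uf, hUfopen, haUf, hUfinj, hUfimg, g₀, hg₀diff, hg₀eq⟩ := hf₀ a hae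
      refine ⟨Uf ∩ U₀, hUfopen.inter hU₀open, ⟨by rw [hxa]; exact haUf, by rw [hxa]; exact hae⟩,
        hUfinj.mono Set.inter_subset_left, hopen _ (hUfopen.inter hU₀open),
        fun z => (z 0) ^ (m + 1) * g₀ z + ∑ k : Fin (d + 1), c k * (z 0) ^ (m - k.val), ?_, ?_⟩
      · refine DifferentiableOn.add ?_ ?_
        · exact ((((ContinuousLinearMap.proj 0 : (Fin 1 → ℂ) →L[ℂ] ℂ).differentiable.differentiableOn).pow
            _).mul (hg₀diff.mono (Set.image_mono  Set.inter_subset_left)))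
        · exact DifferentiableOn.fun_sum (fun k _ =>
            (differentiableOn_const (c k)).mul
            (((ContinuousLinearMap.proj 0 : (Fin 1 → ℂ) →L[ℂ] ℂ).differentiable.differentiableOn).pow _))
      · rintro y ⟨⟨hyUf, hyU₀⟩, -⟩
        show G y = (RD.π y 0) ^ (m + 1) * g₀ (RD.π y)
          + ∑ k : Fin (d + 1), c k * (RD.π y 0) ^ (m - k.val)
        by_cases hya : y = a
        · rw [hya, hGa]
          have hπa0 : RD.π a 0 = 0 := by rw [ha]; rfl
          rw [hπa0, zero_pow (Nat.succ_ne_zero m), zero_mul, zero_add]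
          exact hzero.symm
        · have hw : RD.π y 0 ≠ 0 := hπne y hyU₀ hya
          have hsum : (∑ k : Fin (d + 1), c k * ((RD.π y 0)⁻¹) ^ (k.val + 1))
              = f₁ y - f₀ y := heqn (⟨hyU₀, hya⟩ : y ∈ U₀ ∩ U₁)
          have hf₀y : f₀ y = g₀ (RD.π y) := hg₀eq ⟨hyUf, hyU₀⟩
          rw [hGne y hya]
          have hf₁y : f₁ y = f₀ y + ∑ k : Fin (d + 1), c k * ((RD.π y 0)⁻¹) ^ (k.val + 1) := by
            rw [hsum]; ring
          rw [hf₁y, hf₀y, mul_add, Finset.mul_sum]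
          congr 1
          exact Finset.sum_congr rfl (fun k _ => hkey (RD.π y 0) hw k)
    · obtain ⟨U, hUopen, hxU, hUinj, hUimg, g, hgdiff, hgeq⟩ := hf₁ x hxa
      refine ⟨U ∩ {a}ᶜ, hUopen.inter (hcompl a), ⟨hxU, hxa⟩, hUinj.mono Set.inter_subset_left,
        hopen _ (hUopen.inter (hcompl a)), fun z => (z 0) ^ (m + 1) * g z, ?_, ?_⟩
      · exact (((ContinuousLinearMap.proj 0 : (Fin 1 → ℂ) →L[ℂ] ℂ).differentiable.differentiableOn).pow
          _).mul (hgdiff.mono (Set.image_mono  Set.inter_subset_left))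
      · rintro y ⟨⟨hyU, hya⟩, -⟩
        show G y = (RD.π y 0) ^ (m + 1) * g (RD.π y)
        rw [hGne y hya, hgeq ⟨hyU, hya⟩]
        rfl
  · -- EqOn G (π^h f₁) on {a}ᶜ
    intro x hx
    exact hGne x hx
  · -- G a ≠ 0
    rw [hGa]
    exact hcM
  · -- G b = 0
    have hba : b ≠ a := fun h => hab h.symm
    rw [hGne b hba]
    have hπb : RD.π b 0 = 0 := by rw [hb]; rfl
    rw [hπb, zero_pow (Nat.succ_ne_zero m), zero_mul]
end

section
/- Let X_c ⊆ X_b be sublevel sets of a plurisubharmonic exhaustion of a Riemann domain X, both Stein, and let K ⋐ X_c be compact with K̂_{X_c} ⊆ K̂_{X_b} ⋐ X_c. If every function holomorphic on some 𝒪(X_b)-analytic polyhedron P with K̂_{X_b} ⋐ P ⋐ X_c can be approximated uniformly on K̂_{X_b} by functions in 𝒪(X_b), then K̂_{X_c} = K̂_{X_b}. -/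
open Set

lemma holo_continuousOn {X : Type*} [TopologicalSpace X] {n : ℕ} (RD : RiemannDomain X n)
    {f : X → ℂ} {A : Set X} (h : RD.HolomorphicOn f A) : ContinuousOn f A := by
  intro x hx
  obtain ⟨U, hU, hxU, -, hopen, g, hg, heq⟩ := h x hx
  have hgd : DifferentiableAt ℂ g (RD.π x) :=
    hg.differentiableAt (hopen.mem_nhds ⟨x, hxU, rfl⟩)
  have hcont : ContinuousAt (g ∘ RD.π) x :=
    hgd.continuousAt.comp RD.continuous_π.continuousAt
  have hev : f =ᶠ[nhdsWithin x A] (g ∘ RD.π) := by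
    filter_upwards [mem_nhdsWithin_of_mem_nhds (hU.mem_nhds hxU), self_mem_nhdsWithin]
      with y h1 h2 using heq ⟨h1, h2⟩
  exact (hcont.continuousWithinAt).congr_of_eventuallyEq hev (heq ⟨hxU, hx⟩)

lemma holo_mono {X : Type*} [TopologicalSpace X] {n : ℕ} (RD : RiemannDomain X n)
    {f : X → ℂ} {A B : Set X} (h : RD.HolomorphicOn f A) (hBA : B ⊆ A) :
    RD.HolomorphicOn f B := by
  intro x hx
  obtain ⟨U, hU, hxU, hinj, hopen, g, hg, heq⟩ := h x (hBA hx)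
  exact ⟨U, hU, hxU, hinj, hopen, g, hg, fun y hy => heq ⟨hy.1, hBA hy.2⟩⟩

/-- Let `X_c ⊆ X_b` be Stein sublevel sets of a plurisubharmonic exhaustion
`φ`, `K ⋐ X_c` compact with `K̂_{X_c} ⊆ K̂_{X_b} ⋐ X_c`. If some `𝒪(X_b)`-analytic
polyhedron `P` with `K̂_{X_b} ⋐ P ⋐ X_c` exists, and every function holomorphic on such a
`P` can be approximated uniformly on `K̂_{X_b}` by functions in `𝒪(X_b)`, then
`K̂_{X_c} = K̂_{X_b}`. -/
theorem stmt_15 {X : Type*} [TopologicalSpace X] {n : ℕ} (RD : RiemannDomain X n)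
    (φ : X → ℝ) (hφ : RD.PSHOn φ Set.univ) (hex : RiemannDomain.IsExhaustion φ)
    (c b : ℝ) (hcb : c < b)
    (hSc : RD.IsSteinOn {x | φ x < c}) (hSb : RD.IsSteinOn {x | φ x < b})
    (K : Set X) (hK : IsCompact K) (hKc : K ⊆ {x | φ x < c})
    (hsub : RD.hull {x | φ x < c} K ⊆ RD.hull {x | φ x < b} K)
    (hcc : CompactlyContained (RD.hull {x | φ x < b} K) {x | φ x < c})
    (hPex : ∃ (m : ℕ) (F : Fin m → X → ℂ), (∀ j, RD.HolomorphicOn (F j) {x | φ x < b}) ∧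
      CompactlyContained {x ∈ {x | φ x < b} | ∀ j, ‖F j x‖ < 1} {x | φ x < b} ∧
      closure (RD.hull {x | φ x < b} K) ⊆ {x ∈ {x | φ x < b} | ∀ j, ‖F j x‖ < 1} ∧
      closure {x ∈ {x | φ x < b} | ∀ j, ‖F j x‖ < 1} ⊆ {x | φ x < c})
    (hApprox : ∀ (m : ℕ) (F : Fin m → X → ℂ),
      (∀ j, RD.HolomorphicOn (F j) {x | φ x < b}) →
      CompactlyContained {x ∈ {x | φ x < b} | ∀ j, ‖F j x‖ < 1} {x | φ x < b} →
      closure (RD.hull {x | φ x < b} K) ⊆ {x ∈ {x | φ x < b} | ∀ j, ‖F j x‖ < 1} →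
      closure {x ∈ {x | φ x < b} | ∀ j, ‖F j x‖ < 1} ⊆ {x | φ x < c} →
      ∀ g : X → ℂ, RD.HolomorphicOn g {x ∈ {x | φ x < b} | ∀ j, ‖F j x‖ < 1} →
        ∀ ε : ℝ, 0 < ε → ∃ f : X → ℂ, RD.HolomorphicOn f {x | φ x < b} ∧
          ∀ x ∈ RD.hull {x | φ x < b} K, ‖f x - g x‖ < ε) :
    RD.hull {x | φ x < c} K = RD.hull {x | φ x < b} K := by
  apply Set.Subset.antisymm hsub
  intro ζ hζ
  have hζc : ζ ∈ {x | φ x < c} := hcc.2 (subset_closure hζ)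
  refine ⟨hζc, fun g hg => ?_⟩
  by_contra hgt
  push_neg at hgt
  set M := sSup ((fun y => ‖g y‖) '' K) with hM
  have hM0 : 0 ≤ M := Real.sSup_nonneg (by rintro r ⟨y, -, rfl⟩; exact norm_nonneg _)
  set ε := (‖g ζ‖ - M) / 3 with hε
  have hε0 : 0 < ε := by simp only [hε]; linarith
  obtain ⟨m, F, hF, hP1, hP2, hP3⟩ := hPex
  have hgP : RD.HolomorphicOn g {x ∈ {x | φ x < b} | ∀ j, ‖F j x‖ < 1} :=
    holo_mono RD hg (fun x hx => hP3 (subset_closure hx))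
  obtain ⟨f, hfh, hfa⟩ := hApprox m F hF hP1 hP2 hP3 g hgP ε hε0
  -- K ⊆ hull_b K
  have hKb : K ⊆ {x | φ x < b} := fun x hx => lt_trans (hKc hx) hcb
  have hKhull : K ⊆ RD.hull {x | φ x < b} K := by
    intro x hx
    refine ⟨hKb hx, fun h hh => ?_⟩
    have hc : ContinuousOn (fun y => ‖h y‖) K :=
      ((holo_continuousOn RD hh).mono hKb).norm
    have hbdd : BddAbove ((fun y => ‖h y‖) '' K) := (hK.image_of_continuousOn hc).bddAbove
    exact le_csSup hbdd ⟨x, hx, rfl⟩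
  -- bounds
  have hgK : ∀ x ∈ K, ‖g x‖ ≤ M := by
    intro x hx
    have hc : ContinuousOn (fun y => ‖g y‖) K :=
      ((holo_continuousOn RD hg).mono hKc).norm
    exact le_csSup (hK.image_of_continuousOn hc).bddAbove ⟨x, hx, rfl⟩
  have hfK : sSup ((fun y => ‖f y‖) '' K) ≤ M + ε := by
    apply Real.sSup_le
    · rintro r ⟨x, hx, rfl⟩
      have h1 := hfa x (hKhull hx)
      calc ‖f x‖ = ‖(f x - g x) + g x‖ := by ring_nf
        _ ≤ ‖f x - g x‖ + ‖g x‖ := norm_add_le _ _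
        _ ≤ ε + M := add_le_add h1.le (hgK x hx)
        _ = M + ε := by ring
    · linarith
  have hfζ : ‖f ζ‖ ≤ sSup ((fun y => ‖f y‖) '' K) := hζ.2 f hfh
  have h2 := hfa ζ hζ
  have h3 : ‖g ζ‖ - ε ≤ ‖f ζ‖ := by
    have := norm_sub_norm_le (f ζ) (g ζ)
    have h4 : ‖f ζ‖ - ‖g ζ‖ ≤ ‖f ζ - g ζ‖ := norm_sub_norm_le _ _
    have h5 : ‖g ζ‖ - ‖f ζ‖ ≤ ‖f ζ - g ζ‖ := by
      have := norm_sub_norm_le (g ζ) (f ζ)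
      rwa [norm_sub_rev] at this
    linarith
  have : ‖g ζ‖ - M = 3 * ε := by simp only [hε]; ring
  linarith
end

section
/- If a Riemann domain π : X → ℂⁿ is exhausted by an increasing family of Stein open subsets X_c = {φ < c}, c ∈ ℝ, such that each pair (X_c, X_b) for c < b is Runge (every f ∈ 𝒪(X_c) is a locally uniform limit of restrictions from 𝒪(X_b)) and hulls stabilize (K̂_{X_c} = K̂_{X_b} for compact K ⋐ X_c), then X itself is Stein. -/
open Set

namespace StmtAux
open Metric Filter Topology

lemma deriv_center_bound {g : ℂ → ℂ} {r M : ℝ} (hr : 0 < r)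
    (hg : DifferentiableOn ℂ g (ball (0:ℂ) r))
    (hM : ∀ t ∈ ball (0:ℂ) r, ‖g t‖ ≤ M) : ‖deriv g 0‖ ≤ 2 * M / r := by
  have h2 : (0:ℝ) < r/2 := by linarith
  have hsub : closedBall (0:ℂ) (r/2) ⊆ ball 0 r := closedBall_subset_ball (by linarith)
  rw [← Complex.cderiv_eq_deriv isOpen_ball hg h2 hsub]
  have hb : ∀ w ∈ sphere (0:ℂ) (r/2), ‖g w‖ ≤ M := fun w hw =>
    hM w (hsub (sphere_subset_closedBall hw))
  calc ‖Complex.cderiv (r/2) g 0‖ ≤ M / (r/2) := Complex.norm_cderiv_le h2 hb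
    _ = 2 * M / r := by field_simp

lemma slice_hasDerivAt {n : ℕ} {h : (Fin n → ℂ) → ℂ} {z v : Fin n → ℂ}
    {L : (Fin n → ℂ) →L[ℂ] ℂ} (hd : HasFDerivAt h L z) :
    HasDerivAt (fun t : ℂ => h (z + t • v)) (L v) 0 := by
  have h1 : HasDerivAt (fun t : ℂ => z + t • v) v 0 := by
    simpa using ((hasDerivAt_id (0:ℂ)).smul_const v).const_add z
  have h2 : HasFDerivAt h L (z + (0:ℂ) • v) := by simpa using hd
  exact h2.comp_hasDerivAt 0 h1

lemma opNorm_le_of_single {n : ℕ} (L : (Fin n → ℂ) →L[ℂ] ℂ) {C : ℝ} (hC0 : 0 ≤ C)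
    (hC : ∀ j, ‖L (Pi.single j 1)‖ ≤ C) : ‖L‖ ≤ n * C := by
  refine L.opNorm_le_bound (by positivity) fun w => ?_
  have hw : L w = ∑ j, w j • L (Pi.single j 1) := by
    conv_lhs => rw [show w = ∑ j, Pi.single j (w j) from (Finset.univ_sum_single w).symm]
    rw [map_sum]
    congr 1; funext j
    have h1 : Pi.single j (w j) = w j • (Pi.single j (1:ℂ) : Fin n → ℂ) := by
      rw [← Pi.single_smul, smul_eq_mul, mul_one]
    rw [h1, map_smul]
  rw [hw]
  calc ‖∑ j, w j • L (Pi.single j 1)‖ ≤ ∑ j : Fin n, ‖w j • L (Pi.single j 1)‖ :=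
        norm_sum_le _ _
    _ ≤ ∑ _j : Fin n, C * ‖w‖ := by
        refine Finset.sum_le_sum fun j _ => ?_
        rw [norm_smul]
        calc ‖w j‖ * ‖L (Pi.single j 1)‖ ≤ ‖w‖ * C :=
              mul_le_mul (norm_le_pi_norm w j) (hC j) (norm_nonneg _) (norm_nonneg _)
          _ = C * ‖w‖ := mul_comm _ _
    _ = n * C * ‖w‖ := by simp [Finset.sum_const, mul_assoc]

/-- Cauchy estimate for the full derivative of a difference. -/
lemma fderiv_bound {n : ℕ} {h : (Fin n → ℂ) → ℂ} {z₀ : Fin n → ℂ} {r δ : ℝ} (hr : 0 < r)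
    (hd : ∀ w ∈ ball z₀ (2*r), DifferentiableAt ℂ h w)
    (hδ : ∀ w ∈ ball z₀ (2*r), ‖h w‖ ≤ δ) {z : Fin n → ℂ} (hz : z ∈ ball z₀ r) :
    ‖fderiv ℂ h z‖ ≤ n * (2 * δ / r) := by
  have hzz : z ∈ ball z₀ (2*r) := ball_subset_ball (by linarith) hz
  have hδ0 : 0 ≤ δ := le_trans (norm_nonneg _) (hδ z hzz)
  refine opNorm_le_of_single _ (by positivity) fun j => ?_
  set v : Fin n → ℂ := Pi.single j 1 with hv
  have hvnorm : ‖v‖ = 1 := by simp [hv, Pi.norm_single]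
  have hmem : ∀ t : ℂ, t ∈ ball (0:ℂ) r → z + t • v ∈ ball z₀ (2*r) := by
    intro t ht
    rw [mem_ball] at hz ht ⊢
    calc dist (z + t • v) z₀ ≤ dist (z + t • v) z + dist z z₀ := dist_triangle _ _ _
      _ < r + r := by
          refine add_lt_add_of_le_of_lt ?_ hz
          rw [dist_eq_norm]
          simp only [add_sub_cancel_left]
          rw [norm_smul, hvnorm, mul_one]
          simpa [dist_eq_norm] using ht.le
      _ = 2*r := by ring
  have hg : DifferentiableOn ℂ (fun t : ℂ => h (z + t • v)) (ball (0:ℂ) r) := by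
    intro t ht
    have h1 : HasDerivAt (fun s : ℂ => z + s • v) v t := by
      simpa using ((hasDerivAt_id (t:ℂ)).smul_const v).const_add z
    exact (((hd _ (hmem t ht)).comp t h1.differentiableAt)).differentiableWithinAt
  have hMb : ∀ t ∈ ball (0:ℂ) r, ‖(fun t : ℂ => h (z + t • v)) t‖ ≤ δ := fun t ht =>
    hδ _ (hmem t ht)
  have hder : deriv (fun t : ℂ => h (z + t • v)) 0 = fderiv ℂ h z v :=
    (slice_hasDerivAt (hd z hzz).hasFDerivAt).deriv
  have := deriv_center_bound hr hg hMb
  rw [hder] at this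
  exact this

/-- Several-variables version: a locally uniform limit of holomorphic functions on an open
set in `ℂⁿ` is holomorphic. -/
lemma limit_differentiableOn {n : ℕ} {s : Set (Fin n → ℂ)} (hs : IsOpen s)
    {F : ℕ → (Fin n → ℂ) → ℂ} {f : (Fin n → ℂ) → ℂ}
    (hF : ∀ k, DifferentiableOn ℂ (F k) s)
    (h : TendstoLocallyUniformlyOn F f atTop s) : DifferentiableOn ℂ f s := by
  intro z₀ hz₀
  obtain ⟨ε, hε, hball⟩ := Metric.isOpen_iff.mp hs z₀ hz₀
  set r : ℝ := ε/3 with hrdef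
  have hr : 0 < r := by positivity
  have h2r : closedBall z₀ (2*r) ⊆ s :=
    subset_trans (closedBall_subset_ball (by rw [hrdef]; linarith)) hball
  have hcomp : IsCompact (closedBall z₀ (2*r)) := isCompact_closedBall _ _
  have hU : TendstoUniformlyOn F f atTop (closedBall z₀ (2*r)) :=
    (tendstoLocallyUniformlyOn_iff_forall_isCompact hs).mp h _ h2r hcomp
  have hdiffAt : ∀ k, ∀ w ∈ ball z₀ (2*r), DifferentiableAt ℂ (F k) w := fun k w hw =>
    (hF k w (h2r (ball_subset_closedBall hw))).differentiableAt
      (hs.mem_nhds (h2r (ball_subset_closedBall hw)))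
  set G : ℕ → (Fin n → ℂ) → ((Fin n → ℂ) →L[ℂ] ℂ) := fun k z => fderiv ℂ (F k) z with hG
  -- G is uniformly Cauchy on ball z₀ r
  have hGcauchy : UniformCauchySeqOn G atTop (ball z₀ r) := by
    rw [Metric.uniformCauchySeqOn_iff]
    intro δ hδ
    obtain ⟨N, hN⟩ := Metric.uniformCauchySeqOn_iff.mp hU.uniformCauchySeqOn
      (δ * r / (4 * (n+1))) (by positivity)
    refine ⟨N, fun k hk m hm z hz => ?_⟩
    have hkey : ∀ w ∈ ball z₀ (2*r), ‖(F k - F m) w‖ ≤ δ * r / (4 * (n+1)) := by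
      intro w hw
      have := hN k hk m hm w (ball_subset_closedBall hw)
      rw [dist_eq_norm] at this
      exact this.le
    have hdm : ∀ w ∈ ball z₀ (2*r), DifferentiableAt ℂ (F k - F m) w := fun w hw =>
      (hdiffAt k w hw).sub (hdiffAt m w hw)
    have hb := fderiv_bound hr hdm hkey hz
    have heq : fderiv ℂ (F k - F m) z = G k z - G m z := by
      have hzz : z ∈ ball z₀ (2*r) := ball_subset_ball (by linarith) hz
      exact fderiv_sub (hdiffAt k z hzz) (hdiffAt m z hzz)
    rw [heq] at hb
    rw [dist_eq_norm]
    calc ‖G k z - G m z‖ ≤ n * (2 * (δ * r / (4 * (n+1))) / r) := hb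
      _ = δ * (n / (2 * (n+1))) := by field_simp; ring
      _ < δ := by
          have h1 : (n:ℝ) / (2 * (n+1)) < 1 := by
            rw [div_lt_one (by positivity)]; push_cast; linarith
          calc δ * ((n:ℝ) / (2 * (n+1))) < δ * 1 := by
                exact mul_lt_mul_of_pos_left h1 hδ
            _ = δ := mul_one δ
  -- pointwise limit of G
  have hGpt : ∀ z ∈ ball z₀ r, ∃ L, Tendsto (fun k => G k z) atTop (𝓝 L) := by
    intro z hz
    exact cauchySeq_tendsto_of_complete (hGcauchy.cauchySeq hz)
  classical
  set g' : (Fin n → ℂ) → ((Fin n → ℂ) →L[ℂ] ℂ) := fun z =>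
    if hz : z ∈ ball z₀ r then (hGpt z hz).choose else 0 with hg'
  have hGU : TendstoUniformlyOn G g' atTop (ball z₀ r) := by
    refine hGcauchy.tendstoUniformlyOn_of_tendsto fun z hz => ?_
    rw [hg']; simp only [hz, dif_pos]
    exact (hGpt z hz).choose_spec
  have hmain : HasFDerivAt f (g' z₀) z₀ := by
    refine hasFDerivAt_of_tendstoUniformlyOn isOpen_ball hGU
      (fun k z hz => (hdiffAt k z (ball_subset_ball (by linarith) hz)).hasFDerivAt)
      (fun z hz => hU.tendsto_at (ball_subset_closedBall (ball_subset_ball (by linarith) hz)))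
      (mem_ball_self hr)
  exact hmain.differentiableAt.differentiableWithinAt

end StmtAux
namespace StmtAux

open Metric Filter Topology RiemannDomain

variable {X : Type*} [TopologicalSpace X] {n : ℕ}

lemma holo_mono {RD : RiemannDomain X n} {f : X → ℂ} {A B : Set X}
    (hf : RD.HolomorphicOn f A) (hBA : B ⊆ A) : RD.HolomorphicOn f B := by
  intro x hx
  obtain ⟨U, hU, hxU, hinj, hop, g, hg, heq⟩ := hf x (hBA hx)
  exact ⟨U, hU, hxU, hinj, hop, g, hg, heq.mono (Set.inter_subset_inter_right _ hBA)⟩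

lemma chart (RD : RiemannDomain X n) (x : X) :
    ∃ e : OpenPartialHomeomorph X (Fin n → ℂ), x ∈ e.source ∧ RD.π = e :=
  RD.isLocalHomeomorph x

lemma holo_const (RD : RiemannDomain X n) (c : ℂ) (A : Set X) :
    RD.HolomorphicOn (fun _ => c) A := by
  intro x hx
  obtain ⟨e, hxe, hπ⟩ := chart RD x
  refine ⟨e.source, e.open_source, hxe, ?_, ?_, fun _ => c, differentiableOn_const c,
    fun y _ => rfl⟩
  · rw [hπ]; exact e.injOn
  · rw [hπ, e.image_source_eq_target]; exact e.open_target

lemma holo_coord (RD : RiemannDomain X n) (j : Fin n) (A : Set X) :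
    RD.HolomorphicOn (fun y => RD.π y j) A := by
  intro x hx
  obtain ⟨e, hxe, hπ⟩ := chart RD x
  refine ⟨e.source, e.open_source, hxe, ?_, ?_, fun z => z j, ?_, fun y _ => rfl⟩
  · rw [hπ]; exact e.injOn
  · rw [hπ, e.image_source_eq_target]; exact e.open_target
  · exact (ContinuousLinearMap.proj j : (Fin n → ℂ) →L[ℂ] ℂ).differentiable.differentiableOn

lemma holo_continuousOn {RD : RiemannDomain X n} {f : X → ℂ} {A : Set X} (hA : IsOpen A)
    (hf : RD.HolomorphicOn f A) : ContinuousOn f A := by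
  intro x hx
  obtain ⟨U, hU, hxU, hinj, hop, g, hg, heq⟩ := hf x hx
  have hgx : ContinuousAt g (RD.π x) :=
    ((hg (RD.π x) ⟨x, hxU, rfl⟩).differentiableAt (hop.mem_nhds ⟨x, hxU, rfl⟩)).continuousAt
  have hgcomp : ContinuousAt (g ∘ RD.π) x := hgx.comp RD.continuous_π.continuousAt
  have hmem : U ∩ A ∈ 𝓝 x := (hU.inter hA).mem_nhds ⟨hxU, hx⟩
  have : ContinuousAt f x := hgcomp.congr (Filter.eventuallyEq_of_mem hmem fun y hy =>
    (heq hy).symm)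
  exact this.continuousWithinAt

/-- Uniform-on-a-neighborhood limits of holomorphic functions on growing open sets are
holomorphic on all of `X`. -/
lemma holo_limit {RD : RiemannDomain X n} {Ω : ℕ → Set X} (hop : ∀ k, IsOpen (Ω k))
    {f : ℕ → X → ℂ} (hf : ∀ k, RD.HolomorphicOn (f k) (Ω k)) {F : X → ℂ}
    (hconv : ∀ x : X, ∃ (m : ℕ) (V : Set X), IsOpen V ∧ x ∈ V ∧ (∀ k, m ≤ k → V ⊆ Ω k) ∧
      TendstoUniformlyOn (fun k y => f k y) F atTop V) :
    RD.HolomorphicOn F Set.univ := by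
  intro x _
  obtain ⟨m, V, hVop, hxV, hVsub, hVconv⟩ := hconv x
  obtain ⟨e, hxe, hπ⟩ := chart RD x
  set U : Set X := e.source ∩ V with hUdef
  have hUopen : IsOpen U := e.open_source.inter hVop
  have hxU : x ∈ U := ⟨hxe, hxV⟩
  have hUsub : U ⊆ e.source := Set.inter_subset_left
  have hinj : Set.InjOn RD.π U := by rw [hπ]; exact e.injOn.mono hUsub
  set T : Set (Fin n → ℂ) := RD.π '' U with hTdef
  have hTopen : IsOpen T := by
    rw [hTdef, hπ]
    exact e.isOpen_image_of_subset_source hUopen hUsub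
  have hsymm : ∀ y ∈ U, e.symm (RD.π y) = y := by
    intro y hy; rw [hπ]; exact e.left_inv (hUsub hy)
  have hTmem : ∀ z ∈ T, e.symm z ∈ U := by
    rintro z ⟨y, hy, rfl⟩; rw [hsymm y hy]; exact hy
  -- shifted family read through the chart
  set h : ℕ → (Fin n → ℂ) → ℂ := fun k z => f (k + m) (e.symm z) with hhdef
  set H : (Fin n → ℂ) → ℂ := fun z => F (e.symm z) with hHdef
  have hhd : ∀ k, DifferentiableOn ℂ (h k) T := by
    intro k z hz
    have hzU : e.symm z ∈ U := hTmem z hz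
    have hzΩ : e.symm z ∈ Ω (k + m) := hVsub (k+m) (Nat.le_add_left m k) hzU.2
    obtain ⟨U', hU', hyU', hinj', hop', g, hg, heq⟩ := hf (k+m) (e.symm z) hzΩ
    -- h k = g on W
    set W : Set (Fin n → ℂ) := e.target ∩ e.symm ⁻¹' (U' ∩ Ω (k+m)) with hWdef
    have hWopen : IsOpen W := e.symm.isOpen_inter_preimage (hU'.inter (hop (k+m)))
    have hzW : z ∈ W := by
      constructor
      · obtain ⟨y, hy, rfl⟩ := hz
        rw [hπ]; exact e.map_source (hUsub hy)
      · exact ⟨hyU', hzΩ⟩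
    have heqW : ∀ w ∈ W, h k w = g w := by
      rintro w ⟨hw1, hw2⟩
      have : RD.π (e.symm w) = w := by rw [hπ]; exact e.right_inv hw1
      calc h k w = f (k+m) (e.symm w) := rfl
        _ = g (RD.π (e.symm w)) := heq hw2
        _ = g w := by rw [this]
    have hπz : RD.π (e.symm z) = z := by rw [hπ]; exact e.right_inv hzW.1
    have hgz : DifferentiableAt ℂ g z := by
      have : z ∈ RD.π '' U' := ⟨e.symm z, hyU', hπz⟩
      exact (hg z this).differentiableAt (hop'.mem_nhds this)
    have : DifferentiableAt ℂ (h k) z :=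
      hgz.congr_of_eventuallyEq (Filter.eventuallyEq_of_mem (hWopen.mem_nhds hzW) heqW)
    exact this.differentiableWithinAt
  have hhconv : TendstoLocallyUniformlyOn h H atTop T := by
    refine TendstoUniformlyOn.tendstoLocallyUniformlyOn ?_
    intro u hu
    have h1 := hVconv u hu
    have h2 : ∀ᶠ k in atTop, ∀ y ∈ V, (F y, f (k + m) y) ∈ u :=
      (tendsto_add_atTop_nat m).eventually h1
    refine h2.mono fun k hk z hz => hk _ (hTmem z hz).2
  have hHd : DifferentiableOn ℂ H T := limit_differentiableOn hTopen hhd hhconv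
  refine ⟨U, hUopen, hxU, hinj, hTopen, H, hHd, fun y hy => ?_⟩
  have : e.symm (RD.π y) = y := hsymm y hy.1
  simp only [Function.comp_apply, hHdef]
  rw [this]

end StmtAux
namespace StmtAux
open Metric Filter Topology RiemannDomain

lemma geom_limit {u : ℕ → ℂ} {ε : ℝ} {m : ℕ}
    (hu : ∀ k, m ≤ k → ‖u (k+1) - u k‖ ≤ ε / 2^(k+1)) :
    ∃ L, Tendsto u atTop (𝓝 L) ∧ ∀ k, m ≤ k → ‖u k - L‖ ≤ ε / 2^k := by
  set v : ℕ → ℂ := fun t => u (t + m) with hv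
  have hC : ∀ t, dist (v t) (v (t+1)) ≤ (ε / 2^(m+1)) * (1/2)^t := by
    intro t
    have h1 := hu (t + m) (Nat.le_add_left m t)
    rw [dist_eq_norm, norm_sub_rev, hv]
    have he : t + m + 1 = t + 1 + m := by ring
    simp only []
    rw [show t + 1 + m = t + m + 1 from by ring]
    refine h1.trans (le_of_eq ?_)
    rw [show t + m + 1 = t + 1 + m from by ring]
    have h2 : (2:ℝ)^(t+1+m) = 2^(m+1) * 2^t := by rw [← pow_add]; congr 1; ring
    rw [h2, one_div, inv_pow]
    field_simp
  have hcv : CauchySeq v := cauchySeq_of_le_geometric (1/2) (ε / 2^(m+1)) (by norm_num) hC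
  obtain ⟨L, hL⟩ := cauchySeq_tendsto_of_complete hcv
  have hut : Tendsto u atTop (𝓝 L) := by
    rw [← tendsto_add_atTop_iff_nat m]
    exact hL
  refine ⟨L, hut, fun k hk => ?_⟩
  have hdist := dist_le_of_le_geometric_of_tendsto (1/2) (ε / 2^(m+1)) (by norm_num) hC hL (k - m)
  have hvk : v (k - m) = u k := by rw [hv]; simp only []; rw [Nat.sub_add_cancel hk]
  rw [hvk, dist_eq_norm] at hdist
  refine hdist.trans (le_of_eq ?_)
  have h1 : (2:ℝ)^k = 2^(m+1) * 2^(k-m) / 2 := by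
    rw [← pow_add, show m+1+(k-m) = k+1 from by omega, pow_succ]
    field_simp
  rw [h1, one_div, inv_pow]
  have h2 : (1:ℝ) - 2⁻¹ = 2⁻¹ := by norm_num
  rw [h2]
  field_simp

end StmtAux
namespace StmtAux
open Metric Filter Topology RiemannDomain

variable {X : Type*} [TopologicalSpace X] {n : ℕ}

lemma approx {RD : RiemannDomain X n} {φ : X → ℝ}
    (hex : RiemannDomain.IsExhaustion φ) (hopen : ∀ c : ℝ, IsOpen {x | φ x < c})
    (hRunge : ∀ c b : ℝ, c < b → ∀ f : X → ℂ, RD.HolomorphicOn f {x | φ x < c} →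
      ∀ K : Set X, IsCompact K → K ⊆ {x | φ x < c} → ∀ ε : ℝ, 0 < ε →
        ∃ g : X → ℂ, RD.HolomorphicOn g {x | φ x < b} ∧ ∀ x ∈ K, ‖g x - f x‖ ≤ ε)
    {c₀ : ℝ} {f₀ : X → ℂ} (hf₀ : RD.HolomorphicOn f₀ {x | φ x < c₀})
    {K : Set X} (hKc : IsCompact K) (hKs : K ⊆ {x | φ x < c₀}) {ε : ℝ} (hε : 0 < ε) :
    ∃ F : X → ℂ, RD.HolomorphicOn F Set.univ ∧ ∀ x ∈ K, ‖F x - f₀ x‖ ≤ ε := by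
  classical
  have hmono : ∀ a b : ℝ, a ≤ b → {x | φ x < a} ⊆ {x | φ x < b} := fun a b hab x hx =>
    lt_of_lt_of_le hx hab
  have step : ∀ a : ℝ, ∃ b, a < b ∧ closure {x | φ x < a} ⊆ {x | φ x < b} := by
    intro a
    have hdir : Directed (· ⊆ ·) (fun t : ℝ => {x | φ x < t}) := fun s t =>
      ⟨max s t, hmono _ _ (le_max_left _ _), hmono _ _ (le_max_right _ _)⟩
    have hcover : closure {x | φ x < a} ⊆ ⋃ t : ℝ, {x | φ x < t} := fun x _ =>
      Set.mem_iUnion.mpr ⟨φ x + 1, show φ x < φ x + 1 from lt_add_one _⟩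
    obtain ⟨t, ht⟩ := (hex a).elim_directed_cover _ (fun t => hopen t) hcover hdir
    exact ⟨max t (a+1), lt_of_lt_of_le (lt_add_one a) (le_max_right _ _),
      ht.trans (hmono _ _ (le_max_left _ _))⟩
  choose nxtc hnxtc1 hnxtc2 using step
  -- the sequence of levels
  set cs : ℕ → ℝ := fun k => Nat.rec c₀ (fun k a => max (nxtc a) ((k:ℝ)+1)) k with hcs
  have hcs0 : cs 0 = c₀ := rfl
  have hcss : ∀ k, cs (k+1) = max (nxtc (cs k)) ((k:ℝ)+1) := fun k => rfl
  have hlt : ∀ k, cs k < cs (k+1) := fun k => by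
    rw [hcss]; exact lt_of_lt_of_le (hnxtc1 (cs k)) (le_max_left _ _)
  have hcsm : Monotone cs := monotone_nat_of_le_succ fun k => (hlt k).le
  have hsubcl : ∀ k, closure {x | φ x < cs k} ⊆ {x | φ x < cs (k+1)} := fun k => by
    rw [hcss]; exact (hnxtc2 (cs k)).trans (hmono _ _ (le_max_left _ _))
  have hge : ∀ k : ℕ, (k:ℝ) + 1 ≤ cs (k+1) := fun k => by
    rw [hcss]; exact le_max_right _ _
  have hunb : ∀ x : X, ∃ m, φ x < cs m := by
    intro x
    obtain ⟨N, hN⟩ := exists_nat_gt (φ x)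
    exact ⟨N+1, lt_of_lt_of_le hN (le_trans (by linarith) (hge N))⟩
  -- the compact sets
  set M : ℕ → Set X := fun k => Nat.casesOn k K (fun j => K ∪ closure {x | φ x < cs j})
    with hM
  have hM0 : M 0 = K := rfl
  have hMs : ∀ j, M (j+1) = K ∪ closure {x | φ x < cs j} := fun j => rfl
  have hMc : ∀ k, IsCompact (M k) := by
    intro k; cases k with
    | zero => exact hKc
    | succ j => exact hKc.union (hex (cs j))
  have hMsub : ∀ k, M k ⊆ {x | φ x < cs k} := by
    intro k; cases k with
    | zero => exact hKs
    | succ j =>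
        rw [hMs]
        exact Set.union_subset (hKs.trans (hmono _ _ (hcsm (Nat.zero_le (j+1)))))
          (hsubcl j)
  have hMmono : Monotone M := by
    refine monotone_nat_of_le_succ fun k => ?_
    cases k with
    | zero => exact Set.subset_union_left
    | succ j =>
        rw [hMs j, hMs (j+1)]
        exact Set.union_subset_union_right K (closure_mono (hmono _ _ (hlt j).le))
  -- the sequence of functions
  choose nxt hnxt1 hnxt2 using hRunge
  have hpos : ∀ k : ℕ, (0:ℝ) < ε / 2^(k+1) := fun k => by positivity
  set g : (k : ℕ) → {h : X → ℂ // RD.HolomorphicOn h {x | φ x < cs k}} := fun k =>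
    Nat.rec ⟨f₀, hf₀⟩ (fun k prev =>
      ⟨nxt (cs k) (cs (k+1)) (hlt k) prev.1 prev.2 (M k) (hMc k) (hMsub k)
        (ε / 2^(k+1)) (hpos k),
       hnxt1 (cs k) (cs (k+1)) (hlt k) prev.1 prev.2 (M k) (hMc k) (hMsub k)
        (ε / 2^(k+1)) (hpos k)⟩) k with hg
  have hg0 : (g 0).1 = f₀ := rfl
  have hgb : ∀ k, ∀ x ∈ M k, ‖(g (k+1)).1 x - (g k).1 x‖ ≤ ε / 2^(k+1) := fun k =>
    hnxt2 (cs k) (cs (k+1)) (hlt k) (g k).1 (g k).2 (M k) (hMc k) (hMsub k)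
      (ε / 2^(k+1)) (hpos k)
  -- the limit function
  have hxM : ∀ x : X, ∃ m, x ∈ M (m+1) := by
    intro x
    obtain ⟨m, hm⟩ := hunb x
    exact ⟨m, by rw [hMs]; exact Or.inr (subset_closure hm)⟩
  have hcau : ∀ (m : ℕ) (x : X), x ∈ M m → ∀ k, m ≤ k →
      ‖(g (k+1)).1 x - (g k).1 x‖ ≤ ε / 2^(k+1) := fun m x hx k hk =>
    hgb k x (hMmono hk hx)
  have hFlim : ∀ x : X, ∃ L, Tendsto (fun k => (g k).1 x) atTop (𝓝 L) := by
    intro x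
    obtain ⟨m, hm⟩ := hxM x
    obtain ⟨L, hL, _⟩ := geom_limit (u := fun k => (g k).1 x) (ε := ε) (m := m+1)
      (fun k hk => hcau (m+1) x hm k hk)
    exact ⟨L, hL⟩
  set F : X → ℂ := fun x => (hFlim x).choose with hF
  have hFt : ∀ x, Tendsto (fun k => (g k).1 x) atTop (𝓝 (F x)) := fun x =>
    (hFlim x).choose_spec
  have htail : ∀ (m : ℕ) (x : X), x ∈ M m → ∀ k, m ≤ k →
      ‖(g k).1 x - F x‖ ≤ ε / 2^k := by
    intro m x hx k hk
    obtain ⟨L, hL, hLb⟩ := geom_limit (u := fun k => (g k).1 x) (ε := ε) (m := m)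
      (fun k hk => hcau m x hx k hk)
    rw [tendsto_nhds_unique hL (hFt x)] at hLb
    exact hLb k hk
  -- F is holomorphic on X
  have hFholo : RD.HolomorphicOn F Set.univ := by
    refine holo_limit (Ω := fun k => {x | φ x < cs k}) (fun k => hopen (cs k))
      (f := fun k => (g k).1) (fun k => (g k).2) ?_
    intro x
    obtain ⟨m', hm'⟩ := hunb x
    refine ⟨m', {y | φ y < cs m'}, hopen (cs m'), hm', fun k hk => hmono _ _ (hcsm hk), ?_⟩
    rw [Metric.tendstoUniformlyOn_iff]
    intro δ hδ
    have hδ2 : Tendsto (fun k : ℕ => ε * (1/2:ℝ)^k) atTop (𝓝 0) := by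
      simpa using (tendsto_pow_atTop_nhds_zero_of_lt_one (by norm_num : (0:ℝ) ≤ 1/2)
        (by norm_num : (1/2:ℝ) < 1)).const_mul ε
    have hev : ∀ᶠ k : ℕ in atTop, ε * (1/2:ℝ)^k < δ := by
      have : (0:ℝ) < δ := hδ
      simpa using hδ2.eventually_lt_const this
    filter_upwards [hev, eventually_ge_atTop (m'+1)] with k h1 h2 y hy
    have hyM : y ∈ M (m'+1) := by rw [hMs]; exact Or.inr (subset_closure hy)
    have := htail (m'+1) y hyM k h2
    rw [dist_comm, dist_eq_norm]
    refine lt_of_le_of_lt (this.trans ?_) h1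
    rw [one_div, inv_pow, div_eq_mul_inv]
  refine ⟨F, hFholo, fun x hx => ?_⟩
  have := htail 0 x (by rw [hM0]; exact hx) 0 le_rfl
  rw [hg0, pow_zero, div_one] at this
  rw [norm_sub_rev]
  exact this

end StmtAux

/-- If a Riemann domain `X` is exhausted by Stein sublevel sets
`X_c = {φ < c}` such that every pair `(X_c, X_b)`, `c < b`, is Runge (uniform
approximation on compacts) and hulls stabilize, then `X` itself is Stein. -/
theorem stmt_18 {X : Type*} [TopologicalSpace X] {n : ℕ} (RD : RiemannDomain X n)
    (φ : X → ℝ) (hex : RiemannDomain.IsExhaustion φ)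
    (hSt : ∀ c : ℝ, RD.IsSteinOn {x | φ x < c})
    (hRunge : ∀ c b : ℝ, c < b → ∀ f : X → ℂ, RD.HolomorphicOn f {x | φ x < c} →
      ∀ K : Set X, IsCompact K → K ⊆ {x | φ x < c} → ∀ ε : ℝ, 0 < ε →
        ∃ g : X → ℂ, RD.HolomorphicOn g {x | φ x < b} ∧ ∀ x ∈ K, ‖g x - f x‖ ≤ ε)
    (hstab : ∀ c b : ℝ, c < b → ∀ K : Set X, IsCompact K → K ⊆ {x | φ x < c} →
      RD.hull {x | φ x < c} K = RD.hull {x | φ x < b} K) :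
    RD.IsSteinOn Set.univ := by
  classical
  open StmtAux Metric Filter Topology in
  have hopen : ∀ c : ℝ, IsOpen {x | φ x < c} := by
    intro c
    rw [isOpen_iff_forall_mem_open]
    intro x hx
    obtain ⟨f, _, U, hU, hxU, hUsub, _⟩ := (hSt c).2.1 x hx
    exact ⟨U, hUsub, hU, hxU⟩
  have hmono : ∀ a b : ℝ, a ≤ b → {x | φ x < a} ⊆ {x | φ x < b} := fun a b hab x hx =>
    lt_of_lt_of_le hx hab
  refine ⟨?_, ?_, ?_⟩
  · -- separation
    intro a _ b _ hab
    set c : ℝ := max (φ a) (φ b) + 1 with hc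
    have ha : φ a < c := lt_of_le_of_lt (le_max_left _ _) (lt_add_one _)
    have hb : φ b < c := lt_of_le_of_lt (le_max_right _ _) (lt_add_one _)
    obtain ⟨f, hf, hfab⟩ := (hSt c).1 a ha b hb hab
    have hK : IsCompact ({a, b} : Set X) := (isCompact_singleton).insert a
    have hKsub : ({a, b} : Set X) ⊆ {x | φ x < c} :=
      Set.insert_subset ha (Set.singleton_subset_iff.mpr hb)
    have hε : (0:ℝ) < ‖f a - f b‖ / 3 := by
      have : f a - f b ≠ 0 := sub_ne_zero.mpr hfab
      have := norm_pos_iff.mpr this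
      linarith
    obtain ⟨F, hF, hFb⟩ := StmtAux.approx hex hopen hRunge hf hK hKsub hε
    refine ⟨F, hF, fun h => ?_⟩
    have h1 : ‖F a - f a‖ ≤ ‖f a - f b‖ / 3 := hFb a (Set.mem_insert _ _)
    have h2 : ‖F b - f b‖ ≤ ‖f a - f b‖ / 3 := hFb b (Set.mem_insert_iff.mpr (Or.inr rfl))
    have h3 : f a - f b = -(F a - f a) + (F a - F b) + (F b - f b) := by ring
    have h4 : ‖f a - f b‖ ≤ ‖F a - f a‖ + ‖F b - f b‖ := by
      have h5 : F a - F b = 0 := by rw [h, sub_self]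
      rw [h3, h5, add_zero]
      calc ‖-(F a - f a) + (F b - f b)‖ ≤ ‖-(F a - f a)‖ + ‖F b - f b‖ := norm_add_le _ _
        _ = ‖F a - f a‖ + ‖F b - f b‖ := by rw [norm_neg]
    have : (0:ℝ) < ‖f a - f b‖ := by linarith
    linarith
  · -- local coordinates
    intro x _
    obtain ⟨e, hxe, hπ⟩ := StmtAux.chart RD x
    refine ⟨fun j y => RD.π y j, fun j => StmtAux.holo_coord RD j _, e.source,
      e.open_source, hxe, Set.subset_univ _, ?_, ?_, id, differentiable_id.differentiableOn,
      fun y _ => rfl, ?_, fun z _ w _ h => h⟩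
    · rw [hπ]; exact e.injOn
    · rw [hπ, e.image_source_eq_target]; exact e.open_target
    · have hmem : RD.π x ∈ RD.π '' e.source := ⟨x, hxe, rfl⟩
      have hop : IsOpen (RD.π '' e.source) := by
        rw [hπ, e.image_source_eq_target]; exact e.open_target
      rw [fderivWithin_id (hop.uniqueDiffWithinAt hmem)]
      exact Function.bijective_id
  · -- holomorphic convexity
    intro K _ hKcpt
    rcases K.eq_empty_or_nonempty with rfl | hKne
    · have : RD.hull Set.univ ∅ = ∅ := by
        ext x
        simp only [RiemannDomain.hull, Set.mem_setOf_eq, Set.mem_empty_iff_false, iff_false]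
        rintro ⟨-, h⟩
        have := h (fun _ => 1) (StmtAux.holo_const RD 1 _)
        rw [Set.image_empty, Real.sSup_empty, norm_one] at this
        linarith
      rw [this]
      exact isCompact_empty
    · -- find a level containing K
      have hdir : Directed (· ⊆ ·) (fun t : ℝ => {x | φ x < t}) := fun s t =>
        ⟨max s t, hmono _ _ (le_max_left _ _), hmono _ _ (le_max_right _ _)⟩
      have hcover : K ⊆ ⋃ t : ℝ, {x | φ x < t} := fun x _ =>
        Set.mem_iUnion.mpr ⟨φ x + 1, show φ x < φ x + 1 from lt_add_one _⟩
      obtain ⟨c, hKc⟩ := hKcpt.elim_directed_cover _ (fun t => hopen t) hcover hdir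
      have hHcpt : IsCompact (RD.hull {x | φ x < c} K) := (hSt c).2.2 K hKc hKcpt
      have hsub1 : RD.hull {x | φ x < c} K ⊆ RD.hull Set.univ K := by
        rintro x ⟨hx1, hx2⟩
        exact ⟨Set.mem_univ x, fun f hf => hx2 f (StmtAux.holo_mono hf (Set.subset_univ _))⟩
      have hsub2 : RD.hull Set.univ K ⊆ RD.hull {x | φ x < c} K := by
        rintro x ⟨-, hx2⟩
        by_contra hxH
        set b : ℝ := max (φ x) c + 1 with hbdef
        have hcb : c < b := lt_of_le_of_lt (le_max_right _ _) (lt_add_one _)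
        have hxb : φ x < b := lt_of_le_of_lt (le_max_left _ _) (lt_add_one _)
        rw [hstab c b hcb K hKcpt hKc] at hxH
        have hxH' : ¬ ∀ f : X → ℂ, RD.HolomorphicOn f {x | φ x < b} →
            ‖f x‖ ≤ sSup ((fun y => ‖f y‖) '' K) := fun h => hxH ⟨hxb, h⟩
        push_neg at hxH'
        obtain ⟨f, hf, hflt⟩ := hxH'
        set M : ℝ := sSup ((fun y => ‖f y‖) '' K) with hMdef
        have hKb : K ⊆ {x | φ x < b} := hKc.trans (hmono _ _ hcb.le)
        have hfc : ContinuousOn f {x | φ x < b} :=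
          StmtAux.holo_continuousOn (hopen b) hf
        have hbdd : BddAbove ((fun y => ‖f y‖) '' K) :=
          (hKcpt.image_of_continuousOn
            (continuous_norm.comp_continuousOn (hfc.mono hKb))).bddAbove
        have hM : ∀ y ∈ K, ‖f y‖ ≤ M := fun y hy =>
          le_csSup hbdd (Set.mem_image_of_mem _ hy)
        obtain ⟨y₀, hy₀⟩ := hKne
        have hM0 : 0 ≤ M := le_trans (norm_nonneg _) (hM y₀ hy₀)
        have hε : (0:ℝ) < (‖f x‖ - M) / 3 := by linarith
        have hKx : insert x K ⊆ {x | φ x < b} := Set.insert_subset hxb hKb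
        obtain ⟨F, hFholo, hFb⟩ := StmtAux.approx hex hopen hRunge hf
          (hKcpt.insert x) hKx hε
        have hFx : ‖F x - f x‖ ≤ (‖f x‖ - M) / 3 := hFb x (Set.mem_insert _ _)
        have hFy : ∀ y ∈ K, ‖F y - f y‖ ≤ (‖f x‖ - M) / 3 := fun y hy =>
          hFb y (Set.mem_insert_of_mem _ hy)
        have hhull := hx2 F hFholo
        have hS' : sSup ((fun y => ‖F y‖) '' K) ≤ M + (‖f x‖ - M) / 3 := by
          refine Real.sSup_le ?_ (by linarith)
          rintro z ⟨y, hy, rfl⟩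
          have h1 : ‖F y‖ ≤ ‖f y‖ + ‖F y - f y‖ := by
            calc ‖F y‖ = ‖f y + (F y - f y)‖ := by congr 1; ring
              _ ≤ ‖f y‖ + ‖F y - f y‖ := norm_add_le _ _
          linarith [hM y hy, hFy y hy]
        have h2 : ‖f x‖ - ‖F x‖ ≤ ‖F x - f x‖ := by
          calc ‖f x‖ - ‖F x‖ ≤ ‖f x - F x‖ := norm_sub_norm_le _ _
            _ = ‖F x - f x‖ := norm_sub_rev _ _
        linarith
      have heq : RD.hull Set.univ K = RD.hull {x | φ x < c} K :=
        Set.Subset.antisymm hsub2 hsub1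
      rw [heq]
      exact hHcpt
end
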